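/- In the dihedral group H = ⟨a, b | a^n = b² = 1, bab = a⁻¹⟩ with n even, if S = {b, b·a^i, a^(n/2)} generates H, then either gcd(i, n) = 1, or gcd(i, n) = 2 and n/2 is odd. -/

import Mathlib

open DihedralGroup

/-- Reduction hom D_n → D_m for m ∣ n. -/
def dihedralMap (n m : ℕ) (h : m ∣ n) : DihedralGroup n →* DihedralGroup m where
  toFun x := match x with
    | r k => r (ZMod.castHom h (ZMod m) k)
    | sr k => sr (ZMod.castHom h (ZMod m) k)
  map_one' := by simp [-r_zero, one_def]
  map_mul' := by
    rintro (x | x) (y | y) <;>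
      simp [r_mul_r, r_mul_sr, sr_mul_r, sr_mul_sr, map_add, map_sub]

theorem stmt9 (n : ℕ) (hn : Even n) (hn3 : 3 ≤ n) (i : ℕ)
    (hgen : Subgroup.closure
      ({sr 0, sr ((i : ℕ) : ZMod n), r (((n / 2 : ℕ) : ZMod n))} :
        Set (DihedralGroup n)) = ⊤) :
    Nat.gcd i n = 1 ∨ (Nat.gcd i n = 2 ∧ Odd (n / 2)) := by
  have hn2 : 0 < n / 2 := Nat.div_pos (by omega) (by norm_num)
  set g := Nat.gcd i (n / 2) with hg
  have hgn2 : g ∣ n / 2 := Nat.gcd_dvd_right _ _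
  have hgi : g ∣ i := Nat.gcd_dvd_left _ _
  have hgdvd : g ∣ n := hgn2.trans (Nat.div_dvd_of_dvd hn.two_dvd)
  have hgne : g ≠ 0 := by
    intro h; rw [h] at hgn2; simp at hgn2; omega
  -- key: g = 1
  have hg1 : g = 1 := by
    by_contra hne
    haveI : NeZero g := ⟨hgne⟩
    let φ := dihedralMap n g hgdvd
    have h1 : sr (1 : ZMod g) ∈ Subgroup.zpowers (sr (0 : ZMod g)) := by
      have : sr (1 : ZMod g) ∈ (⊤ : Subgroup (DihedralGroup n)).map φ := by
        refine ⟨sr (1 : ZMod n), trivial, ?_⟩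
        show sr (ZMod.castHom hgdvd (ZMod g) 1) = _
        rw [map_one]
      rw [← hgen, MonoidHom.map_closure] at this
      refine Subgroup.closure_le (Subgroup.zpowers (sr (0 : ZMod g))) |>.2 ?_ this
      rintro x ⟨y, hy, rfl⟩
      rcases hy with rfl | rfl | rfl
      · exact ⟨1, by simp [φ, dihedralMap]⟩
      · refine ⟨1, ?_⟩
        show sr (0 : ZMod g) ^ (1 : ℤ) = sr (ZMod.castHom hgdvd (ZMod g) ((i : ℕ) : ZMod n))
        rw [zpow_one, map_natCast, (ZMod.natCast_eq_zero_iff i g).2 hgi]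
      · refine ⟨0, ?_⟩
        show (1 : DihedralGroup g) = r (ZMod.castHom hgdvd (ZMod g) (((n/2 : ℕ)) : ZMod n))
        simp [ZMod.castHom_apply, map_natCast,
          (ZMod.natCast_eq_zero_iff (n/2) g).2 hgn2]
    obtain ⟨k, hk0⟩ := h1
    have hk : sr (0 : ZMod g) ^ k = sr (1 : ZMod g) := hk0
    have hone : (1 : ZMod g) ≠ 0 := by
      intro h
      have := (ZMod.natCast_eq_zero_iff 1 g).1 (by exact_mod_cast h)
      exact hne (Nat.dvd_one.1 this)
    rcases Int.even_or_odd k with ⟨m, hm⟩ | ⟨m, hm⟩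
    · rw [hm, ← two_mul, zpow_mul, show (sr (0:ZMod g))^(2:ℤ) = 1 by
        rw [zpow_two, sr_mul_sr, sub_self, one_def], one_zpow] at hk
      rw [one_def] at hk; exact absurd hk (by simp [-r_zero])
    · rw [hm, zpow_add, zpow_mul, show (sr (0:ZMod g))^(2:ℤ) = 1 by
        rw [zpow_two, sr_mul_sr, sub_self, one_def], one_zpow, one_mul, zpow_one] at hk
      injection hk with h
      exact hone h.symm
  -- arithmetic
  set d := Nat.gcd i n with hd
  have hcop : Nat.Coprime d (n / 2) :=
    Nat.Coprime.coprime_dvd_left (Nat.gcd_dvd_left i n) hg1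
  have hdn : d ∣ 2 * (n / 2) := by
    have h1 := Nat.gcd_dvd_right i n
    exact h1.trans (dvd_of_eq (Nat.two_mul_div_two_of_even hn).symm)
  have hd2 : d ∣ 2 := (Nat.Coprime.dvd_of_dvd_mul_right hcop hdn)
  rcases (Nat.dvd_prime Nat.prime_two).1 hd2 with h1 | h2
  · left; exact h1
  · right
    refine ⟨h2, ?_⟩
    rw [h2] at hcop
    rw [Nat.odd_iff]
    rcases Nat.even_or_odd (n / 2) with he | ho
    · exfalso
      have h2d : (2:ℕ) ∣ n / 2 := he.two_dvd
      have : Nat.gcd 2 (n / 2) = 2 := Nat.gcd_eq_left h2d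
      rw [Nat.Coprime, this] at hcop
      exact absurd hcop (by norm_num)
    · exact Nat.odd_iff.1 ho
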